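/- Let X and Y be compact connected subsets of the 2-sphere S² such that neither X nor Y separates S², and such that X ∩ Y is nonempty and connected. Then X ∪ Y does not separate S². -/

import Mathlib

open Complex Set Metric


lemma aux_const_of_exp_eq_one {α : Type*} [TopologicalSpace α] {s : Set α}
    (hs : IsPreconnected s) {h : α → ℂ} (hc : ContinuousOn h s)
    (he : ∀ z ∈ s, Complex.exp (h z) = 1) :
    ∀ z ∈ s, ∀ w ∈ s, h z = h w := by
  have him : ∀ z ∈ s, h z = ((h z).im : ℂ) * Complex.I := by
    intro z hz
    obtain ⟨n, hn⟩ := Complex.exp_eq_one_iff.1 (he z hz)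
    have hre : (h z).re = 0 := by rw [hn]; simp
    rw [← Complex.re_add_im (h z), hre]
    simp
  have hmem : ∀ z ∈ s, ∃ n : ℤ, (h z).im = n * (2 * Real.pi) := by
    intro z hz
    obtain ⟨n, hn⟩ := Complex.exp_eq_one_iff.1 (he z hz)
    refine ⟨n, ?_⟩
    rw [hn]
    simp
  have hcim : ContinuousOn (fun z => (h z).im) s := Complex.continuous_im.comp_continuousOn hc
  have himage : IsPreconnected ((fun z => (h z).im) '' s) := hs.image _ hcim
  have hpi := Real.pi_pos
  have key : ∀ a ∈ (fun z => (h z).im) '' s, ∀ b ∈ (fun z => (h z).im) '' s, a < b → False := by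
    rintro a ⟨za, hza, rfl⟩ b ⟨zb, hzb, rfl⟩ hlt
    simp only at hlt
    obtain ⟨n, hn⟩ := hmem za hza
    obtain ⟨m, hm⟩ := hmem zb hzb
    have hnm : n < m := by
      rw [hn, hm] at hlt
      by_contra hc'
      push_neg at hc'
      have : (m:ℝ) ≤ n := by exact_mod_cast hc'
      nlinarith
    have hmid : (h za).im + Real.pi ∈ Set.Icc ((h za).im) ((h zb).im) := by
      refine ⟨by linarith, ?_⟩
      rw [hn, hm]
      have : (n:ℝ) + 1 ≤ m := by exact_mod_cast hnm
      nlinarith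
    obtain ⟨zc, hzc, hceq⟩ := himage.ordConnected.out
      (Set.mem_image_of_mem _ hza) (Set.mem_image_of_mem _ hzb) hmid
    obtain ⟨k, hk⟩ := hmem zc hzc
    simp only at hceq
    rw [hk, hn] at hceq
    have h2 : ((2*k - 2*n : ℤ) : ℝ) = 1 := by push_cast; nlinarith
    have h3 : (2*k - 2*n : ℤ) = 1 := by exact_mod_cast h2
    omega
  intro z hz w hw
  have hsub : (h z).im = (h w).im := by
    rcases lt_trichotomy ((h z).im) ((h w).im) with hlt | heq | hgt
    · exact absurd (key _ (Set.mem_image_of_mem _ hz) _ (Set.mem_image_of_mem _ hw) hlt) not_false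
    · exact heq
    · exact absurd (key _ (Set.mem_image_of_mem _ hw) _ (Set.mem_image_of_mem _ hz) hgt) not_false
  rw [him z hz, him w hw, hsub]

lemma aux_slit {a b : ℂ} (hb : b ≠ 0) (h : ‖a - b‖ < ‖b‖) :
    a / b ∈ Complex.slitPlane := by
  rw [Complex.mem_slitPlane_iff]
  left
  have h1 : ‖a / b - 1‖ < 1 := by
    rw [show a / b - 1 = (a - b) / b by field_simp]
    rw [norm_div]
    rw [div_lt_one (norm_pos_iff.mpr hb)]
    exact h
  have h2 : |(a / b - 1).re| ≤ ‖a / b - 1‖ := Complex.abs_re_le_norm _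
  have h3 : (a / b - 1).re = (a / b).re - 1 := by simp
  have := abs_le.1 h2
  linarith [this.1]

lemma aux_disk_lift {R : ℝ} (hR : 0 < R) {f : ℂ → ℂ}
    (hf : ContinuousOn f (closedBall 0 R)) (hf0 : ∀ z ∈ closedBall (0:ℂ) R, f z ≠ 0) :
    ∃ g : ℂ → ℂ, ContinuousOn g (closedBall 0 R) ∧
      ∀ z ∈ closedBall (0:ℂ) R, Complex.exp (g z) = f z := by
  have hcpt : IsCompact (closedBall (0:ℂ) R) := isCompact_closedBall _ _
  have hne : (closedBall (0:ℂ) R).Nonempty := ⟨0, by simp [hR.le]⟩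
  -- minimum of |f|
  obtain ⟨z₀, hz₀, hmin'⟩ := hcpt.exists_isMinOn hne
    (continuous_norm.comp_continuousOn hf)
  have hmin : ∀ y ∈ closedBall (0:ℂ) R, ‖f z₀‖ ≤ ‖f y‖ :=
    fun y hy => hmin' hy
  set m : ℝ := ‖f z₀‖ with hm
  have hmpos : 0 < m := norm_pos_iff.mpr (hf0 z₀ hz₀)
  -- uniform continuity
  have huc := hcpt.uniformContinuousOn_of_continuous hf
  rw [Metric.uniformContinuousOn_iff] at huc
  obtain ⟨δ, hδ, hδ'⟩ := huc m hmpos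
  -- choose n
  set n : ℕ := ⌈R / δ⌉₊ + 1 with hn
  have hnpos : 0 < (n:ℝ) := by positivity
  have hRn : R / n < δ := by
    rw [div_lt_iff₀ hnpos]
    have h1 : R / δ < n := by
      calc R / δ ≤ ⌈R / δ⌉₊ := Nat.le_ceil _
      _ < n := by exact_mod_cast Nat.lt_succ_self _
    calc R = (R / δ) * δ := by field_simp
    _ < n * δ := by apply mul_lt_mul_of_pos_right h1 hδ
    _ = δ * n := by ring
  set c : ℕ → ℂ := fun k => (((k:ℝ) / (n:ℝ) : ℝ) : ℂ) with hc
  have habs_c : ∀ k : ℕ, k ≤ n → ‖c k‖ ≤ 1 := by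
    intro k hk
    simp only [hc, Complex.norm_real, Real.norm_eq_abs]
    rw [_root_.abs_of_nonneg (by positivity), div_le_one hnpos]
    exact_mod_cast hk
  have hmap : ∀ k : ℕ, k ≤ n → ∀ z ∈ closedBall (0:ℂ) R, c k * z ∈ closedBall (0:ℂ) R := by
    intro k hk z hz
    simp only [mem_closedBall, dist_zero_right] at hz ⊢
    calc ‖c k * z‖ = ‖c k‖ * ‖z‖ := norm_mul _ _
    _ ≤ 1 * R := mul_le_mul (habs_c k hk) hz (norm_nonneg _) zero_le_one
    _ = R := one_mul R
  set u : ℕ → ℂ → ℂ := fun k z => f (c k * z) with hu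
  have hu0 : ∀ k : ℕ, k ≤ n → ∀ z ∈ closedBall (0:ℂ) R, u k z ≠ 0 :=
    fun k hk z hz => hf0 _ (hmap k hk z hz)
  have hstep : ∀ k : ℕ, k < n → ∀ z ∈ closedBall (0:ℂ) R,
      ‖u (k+1) z - u k z‖ < m := by
    intro k hk z hz
    have hd : dist (c (k+1) * z) (c k * z) < δ := by
      rw [dist_eq_norm]
      have : c (k+1) * z - c k * z = (((1:ℝ)/(n:ℝ) : ℝ) : ℂ) * z := by
        simp only [hc]
        push_cast
        ring
      rw [this]
      simp only [mem_closedBall, dist_zero_right] at hz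
      calc ‖(((1:ℝ)/(n:ℝ) : ℝ) : ℂ) * z‖ = (1/(n:ℝ)) * ‖z‖ := by
            simp [_root_.abs_of_nonneg (by positivity : (0:ℝ) ≤ 1/(n:ℝ))]
      _ ≤ (1/(n:ℝ)) * R := by
            apply mul_le_mul_of_nonneg_left hz (by positivity)
      _ = R / n := by ring
      _ < δ := hRn
    have := hδ' _ (hmap (k+1) hk z hz) _ (hmap k hk.le z hz) hd
    rwa [Complex.dist_eq] at this
  have hslit : ∀ k : ℕ, k < n → ∀ z ∈ closedBall (0:ℂ) R,
      u (k+1) z / u k z ∈ Complex.slitPlane := by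
    intro k hk z hz
    apply aux_slit (hu0 k hk.le z hz)
    calc ‖u (k+1) z - u k z‖ < m := hstep k hk z hz
    _ ≤ ‖u k z‖ := hmin _ (hmap k hk.le z hz)
  refine ⟨fun z => Complex.log (f 0) + ∑ k ∈ Finset.range n,
      Complex.log (u (k+1) z / u k z), ?_, ?_⟩
  · apply ContinuousOn.add continuousOn_const
    apply continuousOn_finset_sum
    intro k hk
    rw [Finset.mem_range] at hk
    have hcomp : ∀ j : ℕ, j ≤ n → ContinuousOn (fun z => u j z) (closedBall (0:ℂ) R) := by
      intro j hj
      exact hf.comp ((continuous_const.mul continuous_id).continuousOn)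
        (fun z hz => hmap j hj z hz)
    apply ContinuousOn.clog
    · exact (hcomp (k+1) hk).div (hcomp k hk.le) (fun z hz => hu0 k hk.le z hz)
    · exact fun z hz => hslit k hk z hz
  · intro z hz
    have key : ∀ k : ℕ, k ≤ n →
        Complex.exp (Complex.log (f 0) + ∑ j ∈ Finset.range k,
          Complex.log (u (j+1) z / u j z)) = u k z := by
      intro k
      induction k with
      | zero =>
        intro _
        simp only [Finset.range_zero, Finset.sum_empty, add_zero]
        rw [Complex.exp_log (hf0 0 (by simp [hR.le]))]
        simp only [hu, hc]
        norm_num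
      | succ k ih =>
        intro hk1
        have hk : k < n := hk1
        rw [Finset.sum_range_succ, ← add_assoc, Complex.exp_add, ih hk.le,
          Complex.exp_log (div_ne_zero (hu0 (k+1) hk1 z hz) (hu0 k hk.le z hz))]
        rw [mul_comm, div_mul_cancel₀ _ (hu0 k hk.le z hz)]
    have := key n le_rfl
    rw [this]
    simp only [hu, hc]
    rw [div_self (ne_of_gt hnpos)]
    norm_num

lemma aux_no_log_on_circle {R : ℝ} (hR : 0 < R) {g : ℂ → ℂ}
    (hg : ContinuousOn g (sphere 0 R)) (he : ∀ z ∈ sphere (0:ℂ) R, Complex.exp (g z) = z) :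
    False := by
  set φ : ℝ → ℂ := fun θ => (R:ℂ) * Complex.exp ((θ:ℂ) * Complex.I) with hφdef
  have hφ : ∀ θ : ℝ, φ θ ∈ sphere (0:ℂ) R := by
    intro θ
    simp only [hφdef, mem_sphere_iff_norm, sub_zero, norm_mul,
      Complex.norm_exp_ofReal_mul_I, mul_one, Complex.norm_real, Real.norm_eq_abs]
    exact abs_of_pos hR
  have hφc : Continuous φ := by
    apply continuous_const.mul
    exact Complex.continuous_exp.comp ((Complex.continuous_ofReal.mul continuous_const))
  set h : ℝ → ℂ := fun θ => g (φ θ) - (θ:ℂ) * Complex.I - Complex.log (R:ℂ) with hhdef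
  have hhc : ContinuousOn h (univ : Set ℝ) := by
    apply ContinuousOn.sub
    apply ContinuousOn.sub
    · exact hg.comp hφc.continuousOn (fun θ _ => hφ θ)
    · exact ((Complex.continuous_ofReal.mul continuous_const).continuousOn)
    · exact continuousOn_const
  have hexp : ∀ θ ∈ (univ : Set ℝ), Complex.exp (h θ) = 1 := by
    intro θ _
    simp only [hhdef, Complex.exp_sub]
    rw [he _ (hφ θ), Complex.exp_log (by exact_mod_cast ne_of_gt hR)]
    simp only [hφdef]
    rw [div_div]
    rw [div_eq_one_iff_eq]
    · ring
    · exact mul_ne_zero (Complex.exp_ne_zero _) (by exact_mod_cast ne_of_gt hR)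
  have hcst := aux_const_of_exp_eq_one isPreconnected_univ hhc hexp 0 trivial (2*Real.pi) trivial
  have hφeq : φ 0 = φ (2*Real.pi) := by
    simp only [hφdef]
    congr 1
    push_cast
    rw [Complex.exp_two_pi_mul_I]
    simp
  rw [hhdef] at hcst
  simp only [hφeq] at hcst
  have : ((2*Real.pi : ℝ):ℂ) * Complex.I = 0 := by
    push_cast at hcst ⊢
    linear_combination hcst
  simp only [mul_eq_zero, Complex.I_ne_zero, or_false] at this
  have : (2*Real.pi : ℝ) = 0 := by exact_mod_cast this
  linarith [Real.pi_pos]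

lemma aux_seg_slit {u v z : ℂ} (h : z ∉ segment ℝ u v) :
    (z - u) / (z - v) ∈ Complex.slitPlane := by
  have hzv : z ≠ v := fun h' => h (h' ▸ right_mem_segment ℝ u v)
  rw [Complex.mem_slitPlane_iff]
  by_contra hc
  push_neg at hc
  obtain ⟨hre, him⟩ := hc
  set q : ℂ := (z - u) / (z - v) with hq
  have hqre : q = ((q.re : ℝ) : ℂ) := by
    rw [← Complex.re_add_im q, him]
    simp
  have hkey : z - u = ((q.re:ℝ):ℂ) * (z - v) := by
    rw [← hqre, hq, div_mul_cancel₀ _ (sub_ne_zero.2 hzv)]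
  set t : ℝ := q.re with ht
  have h1t : (0:ℝ) < 1 - t := by
    have : t ≤ 0 := hre
    linarith
  have h1t' : ((1 - t:ℝ):ℂ) ≠ 0 := by exact_mod_cast ne_of_gt h1t
  apply h
  refine ⟨1/(1-t), -t/(1-t), by positivity, div_nonneg (by linarith) h1t.le, ?_, ?_⟩
  · field_simp
    ring
  · show (1/(1-t)) • u + (-t/(1-t)) • v = z
    rw [Complex.real_smul, Complex.real_smul]
    have h1t'' : (1:ℂ) - (t:ℂ) ≠ 0 := by push_cast at h1t'; exact h1t'
    push_cast
    field_simp
    linear_combination -hkey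

lemma aux_log_of_connected_compl {A : Set ℂ} (hA : IsCompact A)
    (hc : IsPreconnected Aᶜ) (h0 : (0:ℂ) ∉ A) :
    ∃ g : ℂ → ℂ, ContinuousOn g A ∧ ∀ z ∈ A, Complex.exp (g z) = z := by
  rcases A.eq_empty_or_nonempty with rfl | hAne
  · exact ⟨fun _ => 0, continuousOn_empty _, fun z hz => absurd hz (notMem_empty z)⟩
  -- bound on A
  obtain ⟨r, hr⟩ := hA.isBounded.subset_closedBall 0
  set M : ℝ := max (r + 1) 1 with hM
  have hM1 : (1:ℝ) ≤ M := le_max_right _ _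
  have hM0 : (0:ℝ) < M := lt_of_lt_of_le one_pos hM1
  have hMA : ∀ z ∈ A, ‖z‖ < M := by
    intro z hz
    have := hr hz
    simp only [mem_closedBall, dist_zero_right] at this
    calc ‖z‖ ≤ r := this
    _ < r + 1 := by linarith
    _ ≤ M := le_max_left _ _
  set x₀ : ℂ := ((2*M : ℝ) : ℂ) with hx₀def
  have hx₀abs : ‖x₀‖ = 2*M := by
    simp only [hx₀def, Complex.norm_real, Real.norm_eq_abs]
    rw [_root_.abs_of_pos (by linarith)]
  have hx₀ : x₀ ∈ Aᶜ := by
    intro hx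
    have := hMA _ hx
    rw [hx₀abs] at this
    linarith
  have h0' : (0:ℂ) ∈ Aᶜ := h0
  -- a path from 0 to x₀ in Aᶜ
  have hopen : IsOpen Aᶜ := hA.isClosed.isOpen_compl
  have hApc : IsPathConnected Aᶜ :=
    (hopen.isConnected_iff_isPathConnected).1 ⟨Set.nonempty_of_mem h0', hc⟩
  obtain ⟨γ, hγ⟩ := hApc.joinedIn 0 h0' x₀ hx₀
  have hγext : ∀ t : ℝ, γ.extend t ∈ Aᶜ := by
    intro t
    show γ.extend t ∈ Aᶜ
    unfold Path.extend
    simp only [ContinuousMap.coe_mk, Set.IccExtend_apply]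
    exact hγ _
  -- positive distance between the path and A
  have hKcpt : IsCompact (range (γ.extend)) := by
    rw [Path.extend_range]
    exact isCompact_range γ.continuous
  have hKne : (range (γ.extend)).Nonempty := ⟨γ.extend 0, mem_range_self 0⟩
  obtain ⟨w₀, hw₀K, hw₀min⟩ := hKcpt.exists_isMinOn hKne
    ((Metric.continuous_infDist_pt A).continuousOn)
  set δ : ℝ := infDist w₀ A with hδdef
  have hδpos : 0 < δ := by
    rw [hδdef, ← hA.isClosed.notMem_iff_infDist_pos hAne]
    obtain ⟨t, rfl⟩ := hw₀K
    exact hγext t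
  have hfar : ∀ t : ℝ, ∀ z ∈ A, δ ≤ dist (γ.extend t) z := by
    intro t z hz
    calc δ ≤ infDist (γ.extend t) A := hw₀min (mem_range_self t)
    _ ≤ dist (γ.extend t) z := infDist_le_dist_of_mem hz
  -- uniform continuity of the path
  have huc := (isCompact_Icc (a := (0:ℝ)) (b := 1)).uniformContinuousOn_of_continuous
    γ.continuous_extend.continuousOn
  rw [Metric.uniformContinuousOn_iff] at huc
  obtain ⟨ε, hε, hε'⟩ := huc (δ/2) (by linarith)
  set n : ℕ := ⌈1/ε⌉₊ + 1 with hn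
  have hnpos : 0 < (n:ℝ) := by positivity
  have hn1 : 1/(n:ℝ) < ε := by
    rw [div_lt_iff₀ hnpos]
    have h1 : 1 / ε < n := by
      calc 1/ε ≤ ⌈1/ε⌉₊ := Nat.le_ceil _
      _ < n := by exact_mod_cast Nat.lt_succ_self _
    calc 1 = (1/ε) * ε := by field_simp
    _ < n * ε := mul_lt_mul_of_pos_right h1 hε
    _ = ε * n := by ring
  set x : ℕ → ℂ := fun k => γ.extend ((k:ℝ)/n) with hx
  have hmemI : ∀ k : ℕ, k ≤ n → (k:ℝ)/n ∈ Icc (0:ℝ) 1 := by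
    intro k hk
    constructor
    · positivity
    · rw [div_le_one hnpos]; exact_mod_cast hk
  have hxA : ∀ k : ℕ, x k ∈ Aᶜ := fun k => hγext _
  have hstep : ∀ k : ℕ, k < n → dist (x k) (x (k+1)) < δ/2 := by
    intro k hk
    apply hε' _ (hmemI k hk.le) _ (hmemI (k+1) hk)
    rw [Real.dist_eq]
    have : (k:ℝ)/n - ((k+1:ℕ):ℝ)/n = -(1/n) := by
      push_cast
      field_simp
      ring
    rw [this, abs_neg, _root_.abs_of_pos (by positivity)]
    exact hn1
  -- segments avoid A
  have hseg : ∀ k : ℕ, k < n → ∀ z ∈ A, z ∉ segment ℝ (x k) (x (k+1)) := by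
    intro k hk z hz hmem
    have h1 : dist (x k) z ≥ δ := hfar _ _ hz
    have h2 : dist (x k) z ≤ dist (x k) (x (k+1)) := by
      have hsub : segment ℝ (x k) (x (k+1)) ⊆ closedBall (x k) (dist (x k) (x (k+1))) := by
        apply (convex_closedBall _ _).segment_subset
        · simp [dist_nonneg]
        · simp [dist_comm]
      have := hsub hmem
      simp only [mem_closedBall] at this
      calc dist (x k) z = dist z (x k) := dist_comm _ _
      _ ≤ dist (x k) (x (k+1)) := this
    have h3 := hstep k hk
    linarith
  -- nonvanishing denominators
  have hzx : ∀ k : ℕ, ∀ z ∈ A, z - x k ≠ 0 := by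
    intro k z hz hzero
    have : z = x k := by linear_combination hzero
    exact (hxA k) (this ▸ hz)
  -- the candidate logarithm
  set g : ℂ → ℂ := fun z => Complex.log (-x₀) + Complex.log (1 - z/x₀) +
    ∑ k ∈ Finset.range n, Complex.log ((z - x k)/(z - x (k+1))) with hg
  have hslit1 : ∀ z ∈ A, 1 - z/x₀ ∈ Complex.slitPlane := by
    intro z hz
    rw [Complex.mem_slitPlane_iff]
    left
    have habs : ‖z/x₀‖ < 1 := by
      rw [norm_div, hx₀abs, div_lt_one (by linarith)]
      calc ‖z‖ < M := hMA z hz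
      _ < 2*M := by linarith
    have := Complex.abs_re_le_norm (z/x₀)
    have h1 : (1 - z/x₀).re = 1 - (z/x₀).re := by simp
    rw [h1]
    have := abs_le.1 this
    linarith [this.1, this.2]
  refine ⟨g, ?_, ?_⟩
  · apply ContinuousOn.add
    apply ContinuousOn.add continuousOn_const
    · apply ContinuousOn.clog
      · exact (continuousOn_const.sub ((continuousOn_id).div_const _))
      · exact hslit1
    · apply continuousOn_finset_sum
      intro k hk
      rw [Finset.mem_range] at hk
      apply ContinuousOn.clog
      · exact ((continuousOn_id.sub continuousOn_const).div
          (continuousOn_id.sub continuousOn_const) (fun z hz => hzx (k+1) z hz))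
      · exact fun z hz => aux_seg_slit (hseg k hk z hz)
  · intro z hz
    have hzne : z ≠ 0 := fun h => h0 (h ▸ hz)
    have hx0eq : x 0 = 0 := by
      simp only [hx]
      norm_num
    have hxneq : x n = x₀ := by
      simp only [hx]
      rw [div_self (ne_of_gt hnpos)]
      exact γ.extend_one
    have hzx₀ : z - x₀ ≠ 0 := hzx n z hz ∘ (hxneq ▸ id)
    have key : ∀ m : ℕ, m ≤ n →
        Complex.exp (Complex.log (-x₀) + Complex.log (1 - z/x₀) +
          ∑ k ∈ Finset.range m, Complex.log ((z - x k)/(z - x (k+1)))) * (z - x m)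
        = (z - x₀) * z := by
      intro m
      induction m with
      | zero =>
        intro _
        simp only [Finset.range_zero, Finset.sum_empty, add_zero]
        rw [Complex.exp_add, Complex.exp_log, Complex.exp_log]
        · rw [hx0eq]
          have hx₀ne : x₀ ≠ 0 := by
            intro hh
            rw [hh] at hx₀abs
            simp at hx₀abs
            linarith
          field_simp
          ring
        · exact Complex.slitPlane_ne_zero (hslit1 z hz)
        · simp only [neg_ne_zero]
          intro hh
          rw [hh] at hx₀abs
          simp at hx₀abs
          linarith
      | succ m ih =>
        intro hm1
        have hm : m < n := hm1
        rw [Finset.sum_range_succ, ← add_assoc, Complex.exp_add,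
          Complex.exp_log (div_ne_zero (hzx m z hz) (hzx (m+1) z hz))]
        calc Complex.exp _ * ((z - x m)/(z - x (m+1))) * (z - x (m+1))
            = Complex.exp _ * (z - x m) := by
              rw [mul_assoc, div_mul_cancel₀ _ (hzx (m+1) z hz)]
        _ = (z - x₀) * z := ih hm.le
    have hkey := key n le_rfl
    rw [hxneq] at hkey
    exact mul_right_cancel₀ hzx₀ (by rw [hg]; linear_combination hkey)

lemma aux_no_log_of_separated {A : Set ℂ} (hA : IsCompact A) {P Q : Set ℂ}
    (hP : IsOpen P) (hQ : IsOpen Q) (hU : Aᶜ = P ∪ Q) (hd : Disjoint P Q)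
    (h0P : (0:ℂ) ∈ P) (hb : Bornology.IsBounded P) {g : ℂ → ℂ}
    (hg : ContinuousOn g A) (he : ∀ z ∈ A, Complex.exp (g z) = z) : False := by
  classical
  have hAcl : IsClosed A := hA.isClosed
  obtain ⟨G, hG⟩ : ∃ G : C(ℂ, ℂ), ∀ z ∈ A, G z = g z := by
    have hrestrict : Continuous (fun z : A => g z) := continuousOn_iff_continuous_restrict.1 hg
    obtain ⟨G, hG⟩ := ContinuousMap.exists_restrict_eq (Y := ℂ) hAcl ⟨_, hrestrict⟩
    refine ⟨G, fun z hz => ?_⟩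
    have h1 : G.restrict A ⟨z, hz⟩ = g z := by rw [hG]; rfl
    simpa using h1
  have hPQc : P ⊆ Qᶜ := fun z hz hzq => (Set.disjoint_left.1 hd) hz hzq
  have hclPQ : closure P ⊆ Qᶜ := closure_minimal hPQc hQ.isClosed_compl
  have hfr : ∀ z ∈ closure P, z ∉ P → z ∈ A := by
    intro z hzc hzP
    by_contra hzA
    have hz' : z ∈ P ∪ Q := by rw [← hU]; exact hzA
    rcases hz' with h | h
    · exact hzP h
    · exact (hclPQ hzc) h
  set F : ℂ → ℂ := fun z => if z ∈ closure P then Complex.exp (G z) else z with hF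
  have hFc : Continuous F := by
    apply Continuous.if ?_ (Complex.continuous_exp.comp G.continuous) continuous_id
    intro a ha
    have ha1 : a ∈ closure P := by
      have : frontier {x : ℂ | x ∈ closure P} ⊆ closure (closure P) := frontier_subset_closure
      simpa [closure_closure] using this ha
    have ha2 : a ∉ P := by
      intro haP
      have hint : P ⊆ interior (closure P) := interior_maximal subset_closure hP
      have : a ∉ interior {x : ℂ | x ∈ closure P} := fun hin => ha.2 hin
      exact this (hint haP)
    have haA : a ∈ A := hfr a ha1 ha2
    show Complex.exp (G a) = a
    rw [hG a haA]
    exact he a haA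
  have hF0 : ∀ z, F z ≠ 0 := by
    intro z
    rw [hF]
    by_cases hzc : z ∈ closure P
    · simp only [hzc, if_true]
      exact Complex.exp_ne_zero _
    · simp only [hzc, if_false]
      intro hz0
      exact hzc (hz0 ▸ subset_closure h0P)
  obtain ⟨R₁, hR₁⟩ := (hA.isBounded.union hb.closure).subset_closedBall 0
  set R : ℝ := max R₁ 1 + 1 with hR
  have hRpos : 0 < R := by
    have : (1:ℝ) ≤ max R₁ 1 := le_max_right _ _
    linarith
  have hRout : ∀ z : ℂ, ‖z‖ = R → z ∉ A ∪ closure P := by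
    intro z hzR hzin
    have := hR₁ hzin
    simp only [mem_closedBall, dist_zero_right] at this
    have h1 : R₁ ≤ max R₁ 1 := le_max_left _ _
    rw [hzR] at this
    linarith
  obtain ⟨lam, hlamc, hlam⟩ := aux_disk_lift hRpos hFc.continuousOn (fun z _ => hF0 z)
  apply aux_no_log_on_circle hRpos (hlamc.mono sphere_subset_closedBall)
  intro z hz
  have hz' : z ∈ closedBall (0:ℂ) R := sphere_subset_closedBall hz
  rw [hlam z hz']
  have hzabs : ‖z‖ = R := by
    simpa [Complex.dist_eq] using hz
  have hznP : z ∉ closure P := fun hc => hRout z hzabs (Or.inr hc)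
  rw [hF]
  simp only [hznP, if_false]

lemma aux_punctured_ball (z₀ : ℂ) {r : ℝ} (hr : 0 < r) :
    IsPreconnected (ball z₀ r \ {z₀}) := by
  have himg : ball z₀ r \ {z₀} =
      (fun p : ℝ × ℂ => z₀ + p.1 • p.2) '' ((Ioo (0:ℝ) r) ×ˢ (sphere (0:ℂ) 1)) := by
    ext z
    constructor
    · rintro ⟨hzb, hz0⟩
      have hne : z - z₀ ≠ 0 := sub_ne_zero.2 (by simpa using hz0)
      have habs : 0 < ‖z - z₀‖ := norm_pos_iff.mpr hne
      refine ⟨⟨‖z - z₀‖, (z - z₀) / ((‖z - z₀‖ : ℝ) : ℂ)⟩,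
        ⟨⟨habs, ?_⟩, ?_⟩, ?_⟩
      · simpa [Complex.dist_eq] using hzb
      · simp only [mem_sphere_iff_norm, sub_zero, norm_div,
          Complex.norm_real, norm_norm]
        rw [div_self (ne_of_gt habs)]
      · show z₀ + ‖z - z₀‖ • ((z - z₀) / ((‖z - z₀‖ : ℝ) : ℂ)) = z
        rw [Complex.real_smul, mul_comm,
          div_mul_cancel₀ _ (by exact_mod_cast ne_of_gt habs : ((‖z - z₀‖ : ℝ) : ℂ) ≠ 0)]
        ring
    · rintro ⟨⟨t, w⟩, ⟨⟨ht0, htr⟩, hw⟩, rfl⟩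
      simp only [mem_sphere_iff_norm, sub_zero] at hw
      have htw : ‖(t:ℝ) • w‖ = t := by
        rw [Complex.real_smul, norm_mul, Complex.norm_real, Real.norm_eq_abs, hw, mul_one, _root_.abs_of_pos ht0]
      constructor
      · simp only [mem_ball, Complex.dist_eq, add_sub_cancel_left]
        rw [htw]
        exact htr
      · simp only [mem_singleton_iff, add_eq_left]
        intro h
        rw [h] at htw
        simp at htw
        linarith
  rw [himg]
  apply IsPreconnected.image
  · exact isPreconnected_Ioo.prod (isConnected_sphere
      (by rw [Complex.rank_real_complex]; norm_num) 0 zero_le_one).isPreconnected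
  · exact (continuous_const.add (continuous_fst.smul continuous_snd)).continuousOn

lemma aux_punctured_preconnected {U : Set ℂ} (hU : IsOpen U) (hc : IsPreconnected U) (z₀ : ℂ) :
    IsPreconnected (U \ {z₀}) := by
  by_cases hz₀ : z₀ ∈ U
  swap
  · rwa [Set.diff_singleton_eq_self hz₀]
  rcases (U \ {z₀}).eq_empty_or_nonempty with hemp | hne
  · rw [hemp]; exact isPreconnected_empty
  obtain ⟨ε, hε, hball⟩ := Metric.isOpen_iff.1 hU z₀ hz₀
  set B' : Set ℂ := ball z₀ (ε/2) \ {z₀} with hB'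
  have hB'pre : IsPreconnected B' := aux_punctured_ball z₀ (by linarith)
  have hB'sub : B' ⊆ U \ {z₀} :=
    diff_subset_diff_left ((ball_subset_ball (by linarith)).trans hball)
  set b₀ : ℂ := z₀ + ((ε/4 : ℝ) : ℂ) with hb₀def
  have hb₀ : b₀ ∈ B' := by
    constructor
    · simp only [hb₀def, mem_ball, Complex.dist_eq, add_sub_cancel_left, Complex.norm_real, Real.norm_eq_abs]
      rw [_root_.abs_of_pos (by linarith)]
      linarith
    · simp only [hb₀def, mem_singleton_iff, add_eq_left]
      intro h
      have : (ε/4 : ℝ) = 0 := by exact_mod_cast h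
      linarith
  have hUpc : IsPathConnected U :=
    hU.isConnected_iff_isPathConnected.1 ⟨⟨z₀, hz₀⟩, hc⟩
  apply isPreconnected_of_forall b₀
  intro y hy
  obtain ⟨hyU, hyz⟩ := hy
  by_cases hyb : y ∈ ball z₀ (ε/2)
  · exact ⟨B', hB'sub, hb₀, ⟨hyb, hyz⟩, hB'pre⟩
  · obtain ⟨γ, hγ⟩ := hUpc.joinedIn y hyU z₀ hz₀
    have hγext : ∀ t : ℝ, γ.extend t ∈ U := by
      intro t
      unfold Path.extend
      simp only [ContinuousMap.coe_mk, Set.IccExtend_apply]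
      exact hγ _
    set T : Set ℝ := {t : ℝ | γ.extend t ∈ closedBall z₀ (ε/4)} ∩ Icc 0 1 with hT
    have hTcl : IsClosed T :=
      (Metric.isClosed_closedBall.preimage γ.continuous_extend).inter isClosed_Icc
    have h1T : (1:ℝ) ∈ T := by
      constructor
      · show γ.extend 1 ∈ closedBall z₀ (ε/4)
        rw [γ.extend_one]
        simp only [mem_closedBall, dist_self]
        linarith
      · exact ⟨zero_le_one, le_refl 1⟩
    have hTbdd : BddBelow T := ⟨0, fun t ht => ht.2.1⟩
    set t₀ : ℝ := sInf T with ht₀def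
    have ht₀T : t₀ ∈ T := hTcl.csInf_mem ⟨1, h1T⟩ hTbdd
    have ht₀I : t₀ ∈ Icc (0:ℝ) 1 := ht₀T.2
    have ht₀pos : 0 < t₀ := by
      rcases lt_or_eq_of_le ht₀I.1 with h | h
      · exact h
      · exfalso
        have h0T : γ.extend 0 ∈ closedBall z₀ (ε/4) := by
          have := ht₀T.1
          rwa [← h] at this
        rw [γ.extend_zero] at h0T
        apply hyb
        simp only [mem_closedBall] at h0T
        simp only [mem_ball]
        calc dist y z₀ ≤ ε/4 := h0T
        _ < ε/2 := by linarith
    have hbefore : ∀ t, 0 ≤ t → t < t₀ → γ.extend t ∉ closedBall z₀ (ε/4) := by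
      intro t ht0 htlt hmem
      have htT : t ∈ T := ⟨hmem, ht0, le_trans htlt.le ht₀I.2⟩
      exact absurd (csInf_le hTbdd htT) (not_le.2 htlt)
    have hlim : ε/4 ≤ dist (γ.extend t₀) z₀ := by
      set S : Set ℝ := {t : ℝ | ε/4 ≤ dist (γ.extend t) z₀} with hS
      have hScl : IsClosed S := by
        apply isClosed_le continuous_const
        exact (continuous_dist.comp (γ.continuous_extend.prodMk continuous_const))
      have hsub : Ico (0:ℝ) t₀ ⊆ S := by
        intro t ⟨h1, h2⟩
        have := hbefore t h1 h2
        simp only [mem_closedBall, not_le] at this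
        exact le_of_lt this
      have : t₀ ∈ closure (Ico (0:ℝ) t₀) := by
        rw [closure_Ico (ne_of_lt ht₀pos)]
        exact ⟨ht₀I.1, le_refl _⟩
      exact hScl.closure_subset ((closure_mono hsub) this)
    have hendB' : γ.extend t₀ ∈ B' := by
      constructor
      · have h1 : dist (γ.extend t₀) z₀ ≤ ε/4 := by
          have := ht₀T.1
          simpa [mem_closedBall] using this
        simp only [mem_ball]
        calc dist (γ.extend t₀) z₀ ≤ ε/4 := h1
        _ < ε/2 := by linarith
      · simp only [mem_singleton_iff]
        intro h
        rw [h] at hlim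
        simp only [dist_self] at hlim
        linarith
    set C : Set ℂ := γ.extend '' Icc 0 t₀ with hC
    refine ⟨C ∪ B', union_subset ?_ hB'sub, Or.inr hb₀, Or.inl ⟨0, ⟨le_refl _, ht₀pos.le⟩, γ.extend_zero⟩, ?_⟩
    · rintro - ⟨t, ⟨ht0, htle⟩, rfl⟩
      refine ⟨hγext t, ?_⟩
      simp only [mem_singleton_iff]
      rcases lt_or_eq_of_le htle with h | h
      · intro heq
        apply hbefore t ht0 h
        rw [heq]
        simp only [mem_closedBall, dist_self]
        linarith
      · intro heq
        rw [← h, heq] at hlim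
        simp only [dist_self] at hlim
        linarith
    · apply IsPreconnected.union (γ.extend t₀)
      · exact ⟨t₀, ⟨ht₀I.1, le_refl _⟩, rfl⟩
      · exact hendB'
      · exact isPreconnected_Icc.image _ γ.continuous_extend.continuousOn
      · exact hB'pre

lemma aux_im_eq_preim {α β : Type*} {C : α → β} {D : β → α} {q : α}
    (hDC : ∀ x, x ≠ q → D (C x) = x) (hCD : ∀ w, C (D w) = w)
    (T : Set α) (hT : T ⊆ {q}ᶜ) : C '' T = D ⁻¹' T := by
  ext w
  constructor
  · rintro ⟨x, hx, rfl⟩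
    have hxq : x ≠ q := hT hx
    show D (C x) ∈ T
    rw [hDC x hxq]
    exact hx
  · intro hw
    exact ⟨D w, hw, hCD w⟩

lemma aux_glue {A B : Set ℂ} (hAcl : IsClosed A) (hBcl : IsClosed B)
    {gA gB : ℂ → ℂ} (hgA : ContinuousOn gA A) (hgB : ContinuousOn gB B)
    (hagree : ∀ z ∈ A ∩ B, gA z = gB z) :
    ∃ g : ℂ → ℂ, ContinuousOn g (A ∪ B) ∧ (∀ z ∈ A, g z = gA z) ∧ (∀ z ∈ B, g z = gB z) := by
  classical
  have honB : ∀ y ∈ B, (if y ∈ A then gA y else gB y) = gB y := by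
    intro y hy
    by_cases hyA : y ∈ A
    · rw [if_pos hyA]; exact hagree y ⟨hyA, hy⟩
    · rw [if_neg hyA]
  refine ⟨fun z => if z ∈ A then gA z else gB z, ?_, fun z hz => if_pos hz, honB⟩
  intro a ha
  have hCA : ContinuousWithinAt (fun z => if z ∈ A then gA z else gB z) A a := by
    by_cases haA : a ∈ A
    · exact (hgA a haA).congr (fun y hy => if_pos hy) (if_pos haA)
    · exact continuousWithinAt_of_notMem_closure (by rwa [hAcl.closure_eq])
  have hCB : ContinuousWithinAt (fun z => if z ∈ A then gA z else gB z) B a := by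
    by_cases haB : a ∈ B
    · refine (hgB a haB).congr honB (honB a haB)
    · exact continuousWithinAt_of_notMem_closure (by rwa [hBcl.closure_eq])
  exact hCA.union hCB

lemma aux_chart (q : ↥(Metric.sphere (0 : EuclideanSpace ℝ (Fin 3)) 1)) :
    ∃ (C : ↥(Metric.sphere (0 : EuclideanSpace ℝ (Fin 3)) 1) → ℂ)
      (D : ℂ → ↥(Metric.sphere (0 : EuclideanSpace ℝ (Fin 3)) 1)),
      ContinuousOn C {q}ᶜ ∧ Continuous D ∧ (∀ x, x ≠ q → D (C x) = x) ∧
      (∀ w, C (D w) = w) ∧ (∀ w, D w ≠ q) := by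
  have hv : ‖(q : EuclideanSpace ℝ (Fin 3))‖ = 1 := norm_eq_of_mem_sphere q
  set st := stereographic hv with hst
  have hv0 : (q : EuclideanSpace ℝ (Fin 3)) ≠ 0 := by
    intro h
    rw [h] at hv
    simp at hv
  have h1 : Module.finrank ℝ (ℝ ∙ (q : EuclideanSpace ℝ (Fin 3))) = 1 :=
    finrank_span_singleton hv0
  have h2 : Module.finrank ℝ ((ℝ ∙ (q : EuclideanSpace ℝ (Fin 3)))ᗮ) = 2 := by
    have h3 := Submodule.finrank_add_finrank_orthogonal
      (K := (ℝ ∙ (q : EuclideanSpace ℝ (Fin 3))))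
    rw [h1, finrank_euclideanSpace_fin] at h3
    omega
  have hcc : Module.finrank ℝ ((ℝ ∙ (q : EuclideanSpace ℝ (Fin 3)))ᗮ) = Module.finrank ℝ ℂ := by
    rw [h2, Complex.finrank_real_complex]
  set ee := (LinearEquiv.ofFinrankEq _ _ hcc).toContinuousLinearEquiv with hee
  have hsource : st.source = {q}ᶜ := by
    rw [hst, stereographic_source]
  have htarget : st.target = Set.univ := by rw [hst, stereographic_target]
  refine ⟨fun x => ee (st x), fun w => st.symm (ee.symm w), ?_, ?_, ?_, ?_, ?_⟩
  · exact ee.continuous.comp_continuousOn (hsource ▸ st.continuousOn)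
  · apply ContinuousOn.comp_continuous (s := st.target)
    · exact st.continuousOn_symm
    · exact ee.symm.continuous
    · intro w
      rw [htarget]
      trivial
  · intro x hx
    show st.symm (ee.symm (ee (st x))) = x
    rw [ee.symm_apply_apply]
    exact st.left_inv (by rw [hsource]; exact hx)
  · intro w
    show ee (st (st.symm (ee.symm w))) = w
    rw [st.right_inv (by rw [htarget]; trivial)]
    exact ee.apply_symm_apply w
  · intro w
    have := st.map_target (x := ee.symm w) (by rw [htarget]; trivial)
    rw [hsource] at this
    exact this


/-- If two compact connected subsets of the `2`-sphere each have connected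
complement and intersect in a nonempty connected set, then their union does
not separate the sphere. -/
theorem union_not_separating_sphere
    (X Y : Set ↥(Metric.sphere (0 : EuclideanSpace ℝ (Fin 3)) 1))
    (hXc : IsCompact X) (hYc : IsCompact Y)
    (hXconn : IsConnected X) (hYconn : IsConnected Y)
    (hXns : IsPreconnected Xᶜ) (hYns : IsPreconnected Yᶜ)
    (hne : (X ∩ Y).Nonempty) (hconn : IsPreconnected (X ∩ Y)) :
    IsPreconnected (X ∪ Y)ᶜ := by
  classical
  by_contra hnc
  rw [IsPreconnected] at hnc
  push_neg at hnc
  obtain ⟨u, v, hu, hv, hcov, ⟨p, hpW, hpu⟩, ⟨q, hqW, hqv⟩, hsep⟩ := hnc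
  set W : Set ↥(Metric.sphere (0 : EuclideanSpace ℝ (Fin 3)) 1) := (X ∪ Y)ᶜ with hW
  have hXYcl : IsClosed (X ∪ Y) := (hXc.union hYc).isClosed
  have hWopen : IsOpen W := hXYcl.isOpen_compl
  set P : Set ↥(Metric.sphere (0 : EuclideanSpace ℝ (Fin 3)) 1) := W ∩ u with hPdef
  set Q : Set ↥(Metric.sphere (0 : EuclideanSpace ℝ (Fin 3)) 1) := W ∩ v with hQdef
  have hPopen : IsOpen P := hWopen.inter hu
  have hQopen : IsOpen Q := hWopen.inter hv
  have hpP : p ∈ P := ⟨hpW, hpu⟩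
  have hqQ : q ∈ Q := ⟨hqW, hqv⟩
  have hPQ : P ∪ Q = W := by
    rw [hPdef, hQdef, ← Set.inter_union_distrib_left]
    exact Set.inter_eq_self_of_subset_left hcov
  have hdisjPQ : Disjoint P Q := by
    rw [Set.disjoint_iff_inter_eq_empty]
    rw [hPdef, hQdef]
    rw [show W ∩ u ∩ (W ∩ v) = W ∩ (u ∩ v) by ext z; simp; tauto]
    exact hsep
  have hpq : p ≠ q := by
    intro h
    exact (Set.disjoint_left.1 hdisjPQ) hpP (h ▸ hqQ)
  -- the charts
  obtain ⟨C0, D0, hC0c, hD0c, hD0C0, hC0D0, hD0ne⟩ := aux_chart q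
  set C : ↥(Metric.sphere (0 : EuclideanSpace ℝ (Fin 3)) 1) → ℂ :=
    fun x => C0 x - C0 p with hCdef
  set D : ℂ → ↥(Metric.sphere (0 : EuclideanSpace ℝ (Fin 3)) 1) :=
    fun w => D0 (w + C0 p) with hDdef
  have hCc : ContinuousOn C {q}ᶜ := hC0c.sub continuousOn_const
  have hDc : Continuous D := hD0c.comp (continuous_id.add continuous_const)
  have hDC : ∀ x, x ≠ q → D (C x) = x := by
    intro x hx
    show D0 (C0 x - C0 p + C0 p) = x
    rw [sub_add_cancel]
    exact hD0C0 x hx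
  have hCD : ∀ w, C (D w) = w := by
    intro w
    show C0 (D0 (w + C0 p)) - C0 p = w
    rw [hC0D0]
    ring
  have hDne : ∀ w, D w ≠ q := fun w => hD0ne _
  have him : ∀ T : Set ↥(Metric.sphere (0 : EuclideanSpace ℝ (Fin 3)) 1),
      T ⊆ {q}ᶜ → C '' T = D ⁻¹' T := fun T hT => aux_im_eq_preim hDC hCD T hT
  have hD0p : D 0 = p := by
    have : C p = 0 := by rw [hCdef]; simp
    rw [← this]
    exact hDC p hpq
  -- subsets of the chart domain
  have hqXY : q ∉ X ∪ Y := hqW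
  have hsubXY : X ∪ Y ⊆ {q}ᶜ := fun x hx hxq => hqXY (by rwa [Set.mem_singleton_iff.1 hxq] at hx)
  have hsubX : X ⊆ {q}ᶜ := fun x hx => hsubXY (Or.inl hx)
  have hsubY : Y ⊆ {q}ᶜ := fun x hx => hsubXY (Or.inr hx)
  -- transfered sets
  set AX : Set ℂ := D ⁻¹' X with hAXdef
  set AY : Set ℂ := D ⁻¹' Y with hAYdef
  have hAXim : C '' X = AX := him X hsubX
  have hAYim : C '' Y = AY := him Y hsubY
  have hAXcpt : IsCompact AX := hAXim ▸ hXc.image_of_continuousOn (hCc.mono hsubX)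
  have hAYcpt : IsCompact AY := hAYim ▸ hYc.image_of_continuousOn (hCc.mono hsubY)
  have h0AX : (0:ℂ) ∉ AX := by
    show D 0 ∉ X
    rw [hD0p]
    exact fun h => hpW (Or.inl h)
  have h0AY : (0:ℂ) ∉ AY := by
    show D 0 ∉ Y
    rw [hD0p]
    exact fun h => hpW (Or.inr h)
  -- the punctured complements are preconnected
  obtain ⟨x₀, hx₀⟩ := hne
  have hqx₀ : q ≠ x₀ := fun h => hqXY (Or.inl (h ▸ hx₀.1))
  obtain ⟨C1, D1, hC1c, hD1c, hD1C1, hC1D1, hD1ne⟩ := aux_chart x₀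
  have him1 : ∀ T : Set ↥(Metric.sphere (0 : EuclideanSpace ℝ (Fin 3)) 1),
      T ⊆ {x₀}ᶜ → C1 '' T = D1 ⁻¹' T := fun T hT => aux_im_eq_preim hD1C1 hC1D1 T hT
  have hpunc : ∀ Z : Set ↥(Metric.sphere (0 : EuclideanSpace ℝ (Fin 3)) 1),
      IsCompact Z → IsPreconnected Zᶜ → x₀ ∈ Z → q ∉ Z → IsPreconnected (Zᶜ \ {q}) := by
    intro Z hZc hZns hx₀Z hqZ
    have hZsub : Zᶜ ⊆ {x₀}ᶜ := fun z hz hzx => hz (by rwa [Set.mem_singleton_iff.1 hzx])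
    set U1 : Set ℂ := D1 ⁻¹' Zᶜ with hU1def
    have hU1open : IsOpen U1 := (hZc.isClosed.isOpen_compl).preimage hD1c
    have hU1pre : IsPreconnected U1 := by
      rw [hU1def, ← him1 _ hZsub]
      exact hZns.image _ (hC1c.mono hZsub)
    have hpp := aux_punctured_preconnected hU1open hU1pre (C1 q)
    have heq : Zᶜ \ {q} = D1 '' (U1 \ {C1 q}) := by
      ext z
      constructor
      · rintro ⟨hzZ, hzq⟩
        have hzx₀ : z ≠ x₀ := fun h => hzZ (h ▸ hx₀Z)
        refine ⟨C1 z, ⟨?_, ?_⟩, hD1C1 z hzx₀⟩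
        · show D1 (C1 z) ∈ Zᶜ
          rw [hD1C1 z hzx₀]
          exact hzZ
        · simp only [mem_singleton_iff]
          intro hC1eq
          apply hzq
          have hqx₀' : q ≠ x₀ := fun h => hqZ (h ▸ hx₀Z)
          have := congrArg D1 hC1eq
          rw [hD1C1 z hzx₀, hD1C1 q hqx₀'] at this
          simp [this]
      · rintro ⟨w, ⟨hwU1, hwC1q⟩, rfl⟩
        refine ⟨hwU1, ?_⟩
        simp only [mem_singleton_iff]
        intro hD1q
        apply hwC1q
        rw [← hD1q, hC1D1 w]
        exact Set.mem_singleton _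
    rw [heq]
    exact hpp.image _ hD1c.continuousOn
  have hAXcompl : IsPreconnected AXᶜ := by
    have h1 : IsPreconnected (Xᶜ \ {q}) :=
      hpunc X hXc hXns hx₀.1 (fun h => hqXY (Or.inl h))
    have h2 : Xᶜ \ {q} ⊆ {q}ᶜ := fun z hz => hz.2
    have h3 : C '' (Xᶜ \ {q}) = AXᶜ := by
      rw [him _ h2]
      ext w
      simp only [mem_preimage, mem_diff, mem_compl_iff, mem_singleton_iff]
      constructor
      · exact fun h => h.1
      · exact fun h => ⟨h, hDne w⟩
    rw [← h3]
    exact h1.image _ (hCc.mono h2)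
  have hAYcompl : IsPreconnected AYᶜ := by
    have h1 : IsPreconnected (Yᶜ \ {q}) :=
      hpunc Y hYc hYns hx₀.2 (fun h => hqXY (Or.inr h))
    have h2 : Yᶜ \ {q} ⊆ {q}ᶜ := fun z hz => hz.2
    have h3 : C '' (Yᶜ \ {q}) = AYᶜ := by
      rw [him _ h2]
      ext w
      simp only [mem_preimage, mem_diff, mem_compl_iff, mem_singleton_iff]
      constructor
      · exact fun h => h.1
      · exact fun h => ⟨h, hDne w⟩
    rw [← h3]
    exact h1.image _ (hCc.mono h2)
  -- the logarithms
  obtain ⟨gX, hgXc, hgX⟩ := aux_log_of_connected_compl hAXcpt hAXcompl h0AX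
  obtain ⟨gY, hgYc, hgY⟩ := aux_log_of_connected_compl hAYcpt hAYcompl h0AY
  -- the intersection
  have hInter : AX ∩ AY = D ⁻¹' (X ∩ Y) := rfl
  have hInterPre : IsPreconnected (AX ∩ AY) := by
    rw [hInter, ← him _ (fun z hz => hsubX hz.1)]
    exact hconn.image _ (hCc.mono (fun z hz => hsubX hz.1))
  have hx₀mem : C x₀ ∈ AX ∩ AY := by
    constructor
    · show D (C x₀) ∈ X
      rw [hDC x₀ (Ne.symm hqx₀)]
      exact hx₀.1
    · show D (C x₀) ∈ Y
      rw [hDC x₀ (Ne.symm hqx₀)]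
      exact hx₀.2
  -- constant difference on the intersection
  have hdiffc : ContinuousOn (fun z => gX z - gY z) (AX ∩ AY) :=
    (hgXc.mono inter_subset_left).sub (hgYc.mono inter_subset_right)
  have hdiffexp : ∀ z ∈ AX ∩ AY, Complex.exp (gX z - gY z) = 1 := by
    intro z hz
    rw [Complex.exp_sub, hgX z hz.1, hgY z hz.2]
    have hz0 : z ≠ 0 := fun h => h0AX (h ▸ hz.1)
    exact div_self hz0
  have hconst := aux_const_of_exp_eq_one hInterPre hdiffc hdiffexp
  set c : ℂ := gX (C x₀) - gY (C x₀) with hcdef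
  have hexpc : Complex.exp c = 1 := hdiffexp _ hx₀mem
  set gY' : ℂ → ℂ := fun z => gY z + c with hgY'def
  have hgY'c : ContinuousOn gY' AY := hgYc.add continuousOn_const
  have hgY' : ∀ z ∈ AY, Complex.exp (gY' z) = z := by
    intro z hz
    rw [hgY'def]
    show Complex.exp (gY z + c) = z
    rw [Complex.exp_add, hgY z hz, hexpc, mul_one]
  have hagree : ∀ z ∈ AX ∩ AY, gX z = gY' z := by
    intro z hz
    have := hconst z hz (C x₀) hx₀mem
    show gX z = gY z + c
    rw [hcdef]
    linear_combination this
  -- glue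
  obtain ⟨g, hgc, hgA, hgB⟩ := aux_glue hAXcpt.isClosed hAYcpt.isClosed hgXc hgY'c hagree
  have hgexp : ∀ z ∈ AX ∪ AY, Complex.exp (g z) = z := by
    intro z hz
    rcases hz with hz | hz
    · rw [hgA z hz]; exact hgX z hz
    · rw [hgB z hz]; exact hgY' z hz
  -- the separation downstairs
  set Pt : Set ℂ := D ⁻¹' P with hPtdef
  set Qt : Set ℂ := D ⁻¹' Q with hQtdef
  have hPtopen : IsOpen Pt := hPopen.preimage hDc
  have hQtopen : IsOpen Qt := hQopen.preimage hDc
  have hA : IsCompact (AX ∪ AY) := hAXcpt.union hAYcpt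
  have hcompl : (AX ∪ AY)ᶜ = Pt ∪ Qt := by
    have h1 : AX ∪ AY = D ⁻¹' (X ∪ Y) := by rw [hAXdef, hAYdef, Set.preimage_union]
    rw [h1, ← Set.preimage_compl, ← hW, ← hPQ, Set.preimage_union]
  have hdisjt : Disjoint Pt Qt := hdisjPQ.preimage D
  have h0Pt : (0:ℂ) ∈ Pt := by
    show D 0 ∈ P
    rw [hD0p]
    exact hpP
  have hbdd : Bornology.IsBounded Pt := by
    obtain ⟨ε, hε, hball⟩ := Metric.isOpen_iff.1 hQopen q hqQ
    set K0 : Set ↥(Metric.sphere (0 : EuclideanSpace ℝ (Fin 3)) 1) := (Metric.ball q ε)ᶜ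
      with hK0def
    have hK0cl : IsClosed K0 := Metric.isOpen_ball.isClosed_compl
    have hK0cpt : IsCompact K0 := hK0cl.isCompact
    have hK0sub : K0 ⊆ {q}ᶜ := by
      intro z hz hzq
      apply hz
      rw [Set.mem_singleton_iff.1 hzq]
      exact Metric.mem_ball_self hε
    have hPK0 : P ⊆ K0 := by
      intro z hz hzball
      exact (Set.disjoint_left.1 hdisjPQ) hz (hball hzball)
    have hPsub : P ⊆ {q}ᶜ := hPK0.trans hK0sub
    have h1 : Pt = C '' P := (him P hPsub).symm
    have h2 : C '' P ⊆ C '' K0 := Set.image_mono hPK0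
    have h3 : IsCompact (C '' K0) := hK0cpt.image_of_continuousOn (hCc.mono hK0sub)
    rw [h1]
    exact h3.isBounded.subset h2
  exact aux_no_log_of_separated hA hPtopen hQtopen hcompl hdisjt h0Pt hbdd hgc hgexp
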